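/- For c ∈ (−1, 0], the Askey-Wimp-Kerov distribution μ_{c+1}, suitably dilated, decomposes as a free additive convolution ν_c ⊞ S of the standard semicircle law S with some probability measure ν_c on ℝ. -/

import Mathlib

open MeasureTheory

/-- The Cauchy transform of a measure on `ℝ`. -/
noncomputable def cauchyTransform (μ : Measure ℝ) (z : ℂ) : ℂ :=
  ∫ t : ℝ, (z - (t : ℂ))⁻¹ ∂μ

/-- The reciprocal Cauchy transform `F_μ = 1/G_μ`. -/
noncomputable def recipCauchy (μ : Measure ℝ) (z : ℂ) : ℂ :=
  (cauchyTransform μ z)⁻¹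

/-- Dilation of a measure on `ℝ` by a factor `r`. -/
noncomputable def dilate (r : ℝ) (μ : Measure ℝ) : Measure ℝ :=
  μ.map (fun x : ℝ => r * x)

/-- `μ` is infinitely divisible w.r.t. the binary convolution operation `conv`. -/
def FreelyInfDivisible (conv : Measure ℝ → Measure ℝ → Measure ℝ) (μ : Measure ℝ) :
    Prop :=
  ∀ n : ℕ, 1 ≤ n → ∃ ν : Measure ℝ, IsProbabilityMeasure ν ∧
    (fun ρ => conv ν ρ)^[n - 1] ν = μ

open Complex Filter Set Real Topology

section Aux

/-! ### Elementary facts about resolvents and Poisson kernels -/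

lemma cont_res {z : ℂ} (hz : z.im ≠ 0) : Continuous fun t : ℝ => (z - (t : ℂ))⁻¹ := by
  apply Continuous.inv₀ (by continuity)
  intro t h
  apply hz
  have := congrArg Complex.im h
  simpa using this

lemma norm_res (z : ℂ) (t : ℝ) :
    ‖(z - (t : ℂ))⁻¹‖ = (Real.sqrt ((z.re - t) ^ 2 + z.im ^ 2))⁻¹ := by
  rw [norm_inv, Complex.norm_def, Complex.normSq_apply]
  congr 1
  congr 1
  simp [Complex.sub_re, Complex.sub_im]
  ring

lemma integrable_res (μ : Measure ℝ) [IsFiniteMeasure μ] {z : ℂ} (hz : z.im ≠ 0) :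
    Integrable (fun t : ℝ => (z - (t : ℂ))⁻¹) μ := by
  refine Integrable.mono' (integrable_const (|z.im|⁻¹)) (cont_res hz).aestronglyMeasurable ?_
  refine Filter.Eventually.of_forall fun t => ?_
  rw [norm_inv]
  refine inv_anti₀ (abs_pos.mpr hz) ?_
  calc |z.im| = |(z - (t : ℂ)).im| := by simp
    _ ≤ ‖z - (t : ℂ)‖ := Complex.abs_im_le_norm _
    _ = ‖z - (t : ℂ)‖ := rfl

lemma im_cauchy (μ : Measure ℝ) {z : ℂ} (hint : Integrable (fun t : ℝ => (z - (t : ℂ))⁻¹) μ) :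
    (cauchyTransform μ z).im = ∫ t : ℝ, -z.im / ((z.re - t) ^ 2 + z.im ^ 2) ∂μ := by
  rw [cauchyTransform, ← RCLike.im_to_complex, ← integral_im hint]
  simp only [RCLike.im_to_complex]
  congr 1
  ext t
  rw [Complex.inv_im, Complex.normSq_apply]
  simp only [Complex.sub_re, Complex.sub_im, Complex.ofReal_re, Complex.ofReal_im, sub_zero]
  ring

lemma key_ineq (x y t : ℝ) :
    min (y ^ 2) 1 * (1 + t ^ 2) ≤ (2 + 2 * x ^ 2) * ((x - t) ^ 2 + y ^ 2) := by
  have h1 : min (y ^ 2) 1 ≤ y ^ 2 := min_le_left _ _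
  have h2 : min (y ^ 2) 1 ≤ 1 := min_le_right _ _
  have h0 : 0 ≤ min (y ^ 2) 1 := le_min (sq_nonneg _) zero_le_one
  nlinarith [sq_nonneg (x - t), sq_nonneg x, sq_nonneg t, sq_nonneg (2 * x - t),
    mul_nonneg (sq_nonneg x) (sq_nonneg (x - t)), mul_nonneg (sq_nonneg x) (sq_nonneg y)]

lemma res_comparison {z : ℂ} (hz : 0 < z.im) (t : ℝ) :
    ‖(z - (t : ℂ))⁻¹‖ ≤
      Real.sqrt ((2 + 2 * z.re ^ 2) / min (z.im ^ 2) 1) * ‖(Complex.I - (t : ℂ))⁻¹‖ := by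
  have hm0 : 0 < min (z.im ^ 2) 1 := lt_min (by positivity) one_pos
  have hq : 0 < (z.re - t) ^ 2 + z.im ^ 2 := by positivity
  have hd : 0 < 1 + t ^ 2 := by positivity
  have hC : 0 < (2 + 2 * z.re ^ 2) / min (z.im ^ 2) 1 := by positivity
  rw [norm_res, norm_res]
  have hIre : (Complex.I.re - t) ^ 2 + Complex.I.im ^ 2 = 1 + t ^ 2 := by
    simp [Complex.I_re, Complex.I_im]; ring
  rw [hIre]
  have hkey : 1 + t ^ 2 ≤ (2 + 2 * z.re ^ 2) / min (z.im ^ 2) 1 * ((z.re - t) ^ 2 + z.im ^ 2) := by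
    rw [div_mul_eq_mul_div, le_div_iff₀ hm0]
    nlinarith [key_ineq z.re z.im t]
  have hsq : Real.sqrt (1 + t ^ 2) ≤
      Real.sqrt ((2 + 2 * z.re ^ 2) / min (z.im ^ 2) 1) *
        Real.sqrt ((z.re - t) ^ 2 + z.im ^ 2) := by
    rw [← Real.sqrt_mul hC.le]
    exact Real.sqrt_le_sqrt hkey
  rw [inv_eq_one_div, inv_eq_one_div, mul_one_div,
    div_le_div_iff₀ (Real.sqrt_pos.mpr hq) (Real.sqrt_pos.mpr hd), one_mul]
  exact hsq

lemma integrable_res_all (η : Measure ℝ)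
    (hI : Integrable (fun t : ℝ => (Complex.I - (t : ℂ))⁻¹) η) {z : ℂ} (hz : 0 < z.im) :
    Integrable (fun t : ℝ => (z - (t : ℂ))⁻¹) η := by
  refine Integrable.mono' (hI.norm.const_mul (Real.sqrt ((2 + 2 * z.re ^ 2) / min (z.im ^ 2) 1)))
    (cont_res hz.ne').aestronglyMeasurable ?_
  exact Filter.Eventually.of_forall fun t => res_comparison hz t

lemma pker_denom_pos {y : ℝ} (hy : 0 < y) (x t : ℝ) : 0 < (x - t) ^ 2 + y ^ 2 := by positivity

lemma cont_pker_x {y : ℝ} (hy : 0 < y) (t : ℝ) :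
    Continuous fun x : ℝ => y / ((x - t) ^ 2 + y ^ 2) :=
  continuous_const.div (by continuity) fun x => (pker_denom_pos hy x t).ne'

lemma pker_nonneg {y : ℝ} (hy : 0 < y) (x t : ℝ) : 0 ≤ y / ((x - t) ^ 2 + y ^ 2) :=
  div_nonneg hy.le (pker_denom_pos hy x t).le

lemma integrable_pker_x {y : ℝ} (hy : 0 < y) (t : ℝ) :
    Integrable (fun x : ℝ => y / ((x - t) ^ 2 + y ^ 2)) := by
  set m := min (y ^ 2) 1 with hm
  have hm0 : 0 < m := lt_min (by positivity) one_pos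
  refine Integrable.mono' ((integrable_inv_one_add_sq.const_mul (y * (2 + 2 * t ^ 2) / m)))
    (cont_pker_x hy t).aestronglyMeasurable (Filter.Eventually.of_forall fun x => ?_)
  rw [Real.norm_eq_abs, _root_.abs_of_nonneg (pker_nonneg hy x t), inv_eq_one_div,
    mul_one_div, div_le_div_iff₀ (pker_denom_pos hy x t) (by positivity),
    div_mul_eq_mul_div, le_div_iff₀ hm0]
  have := key_ineq t y x
  have hx : (t - x) ^ 2 = (x - t) ^ 2 := by ring
  rw [hx] at this
  calc y * (1 + x ^ 2) * m = y * (m * (1 + x ^ 2)) := by ring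
    _ ≤ y * ((2 + 2 * t ^ 2) * ((x - t) ^ 2 + y ^ 2)) := mul_le_mul_of_nonneg_left this hy.le
    _ = y * (2 + 2 * t ^ 2) * ((x - t) ^ 2 + y ^ 2) := by ring

/-- The Poisson kernel (in the `t` variable) is integrable whenever the resolvent is. -/
lemma integrable_pker_of_res (μ : Measure ℝ) {z : ℂ} (hz : 0 < z.im)
    (h : Integrable (fun t : ℝ => (z - (t : ℂ))⁻¹) μ) :
    Integrable (fun t : ℝ => z.im / ((z.re - t) ^ 2 + z.im ^ 2)) μ := by
  have him : Integrable (fun t : ℝ => ((z - (t : ℂ))⁻¹).im) μ := by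
    have := h.im
    simpa [RCLike.im_to_complex] using this
  refine him.neg.congr (Filter.Eventually.of_forall fun t => ?_)
  show -(((z - (t : ℂ))⁻¹).im) = _
  rw [Complex.inv_im, Complex.normSq_apply]
  simp only [Complex.sub_re, Complex.sub_im, Complex.ofReal_re, Complex.ofReal_im, sub_zero]
  rw [neg_div, neg_neg]
  congr 1
  ring

lemma pker_integral_Iio {y : ℝ} (hy : 0 < y) (a t : ℝ) :
    ∫ x in Iio a, y / ((x - t) ^ 2 + y ^ 2) = Real.arctan ((a - t) / y) + π / 2 := by
  rw [setIntegral_congr_set (Iio_ae_eq_Iic (a := a))]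
  have hderiv : ∀ x ∈ Iic a, HasDerivAt (fun x : ℝ => Real.arctan ((x - t) / y))
      (y / ((x - t) ^ 2 + y ^ 2)) x := by
    intro x _
    have h1 : HasDerivAt (fun x : ℝ => (x - t) / y) (1 / y) x := by
      simpa using ((hasDerivAt_id x).sub_const t).div_const y
    have := (Real.hasDerivAt_arctan ((x - t) / y)).comp x h1
    refine this.congr_deriv ?_
    have hy0 : y ≠ 0 := hy.ne'
    field_simp
    ring
  have hint : IntegrableOn (fun x : ℝ => y / ((x - t) ^ 2 + y ^ 2)) (Iic a) :=
    (integrable_pker_x hy t).integrableOn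
  have htend : Tendsto (fun x : ℝ => Real.arctan ((x - t) / y)) atBot (𝓝 (-(π / 2))) := by
    refine (tendsto_nhds_of_tendsto_nhdsWithin Real.tendsto_arctan_atBot).comp ?_
    exact (tendsto_atBot_add_const_right _ (-t) tendsto_id).atBot_div_const hy
  have := integral_Iic_of_hasDerivAt_of_tendsto' hderiv hint htend
  rw [this, sub_neg_eq_add]

end Aux

section Uniqueness

/-- Fubini step: integrating the Poisson kernel over `x < a`. -/
lemma arctan_identity (μ : Measure ℝ) [SFinite μ] (a : ℝ) {y : ℝ} (hy : 0 < y)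
    (hInt : ∀ x : ℝ, Integrable (fun t : ℝ => y / ((x - t) ^ 2 + y ^ 2)) μ) :
    ∫⁻ t : ℝ, ENNReal.ofReal (Real.arctan ((a - t) / y) + π / 2) ∂μ
      = ∫⁻ x in Iio a, ENNReal.ofReal (∫ t : ℝ, y / ((x - t) ^ 2 + y ^ 2) ∂μ) := by
  have hcont : Continuous (fun p : ℝ × ℝ => y / ((p.1 - p.2) ^ 2 + y ^ 2)) := by
    refine continuous_const.div (by continuity) fun p => ?_
    have := pker_denom_pos hy p.1 p.2
    exact this.ne'
  have hmeas : AEMeasurable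
      (Function.uncurry fun x t : ℝ => ENNReal.ofReal (y / ((x - t) ^ 2 + y ^ 2)))
      ((volume.restrict (Iio a)).prod μ) :=
    (hcont.measurable.ennreal_ofReal).aemeasurable
  have swap := lintegral_lintegral_swap hmeas
  calc ∫⁻ t : ℝ, ENNReal.ofReal (Real.arctan ((a - t) / y) + π / 2) ∂μ
      = ∫⁻ t : ℝ, ∫⁻ x in Iio a, ENNReal.ofReal (y / ((x - t) ^ 2 + y ^ 2)) ∂volume ∂μ := by
        refine lintegral_congr fun t => ?_
        rw [← ofReal_integral_eq_lintegral_ofReal ((integrable_pker_x hy t).integrableOn)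
          (Filter.Eventually.of_forall fun x => pker_nonneg hy x t), pker_integral_Iio hy a t]
    _ = ∫⁻ x in Iio a, ∫⁻ t : ℝ, ENNReal.ofReal (y / ((x - t) ^ 2 + y ^ 2)) ∂μ ∂volume :=
        swap.symm
    _ = ∫⁻ x in Iio a, ENNReal.ofReal (∫ t : ℝ, y / ((x - t) ^ 2 + y ^ 2) ∂μ) ∂volume := by
        refine lintegral_congr fun x => ?_
        rw [ofReal_integral_eq_lintegral_ofReal (hInt x)
          (Filter.Eventually.of_forall fun t => pker_nonneg hy x t)]

/-- Dominated convergence step: as `y = 1/(n+1) → 0`. -/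
lemma lim_arctan (μ : Measure ℝ) [IsFiniteMeasure μ] (a : ℝ) :
    Tendsto (fun n : ℕ =>
        ∫⁻ t : ℝ, ENNReal.ofReal (Real.arctan ((a - t) * ((n : ℝ) + 1)) + π / 2) ∂μ)
      atTop (𝓝 (ENNReal.ofReal π * μ (Iio a) + ENNReal.ofReal (π / 2) * μ {a})) := by
  set g : ℝ → ENNReal := fun t => (Iio a).indicator (fun _ => ENNReal.ofReal π) t
    + ({a} : Set ℝ).indicator (fun _ => ENNReal.ofReal (π / 2)) t with hg
  have hlimg : ∫⁻ t, g t ∂μ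
      = ENNReal.ofReal π * μ (Iio a) + ENNReal.ofReal (π / 2) * μ {a} := by
    rw [hg, lintegral_add_left (by measurability), lintegral_indicator measurableSet_Iio,
      lintegral_indicator (measurableSet_singleton a), setLIntegral_const, setLIntegral_const]
  rw [← hlimg]
  have hcast : Tendsto (fun n : ℕ => ((n : ℝ) + 1)) atTop atTop :=
    tendsto_atTop_add_const_right _ 1 tendsto_natCast_atTop_atTop
  refine tendsto_lintegral_of_dominated_convergence (fun _ => ENNReal.ofReal π)
    (fun n => ?_) (fun n => Filter.Eventually.of_forall fun t => ?_) ?_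
    (Filter.Eventually.of_forall fun t => ?_)
  · exact Measurable.ennreal_ofReal
      ((Real.continuous_arctan.comp (by continuity)).add continuous_const).measurable
  · refine ENNReal.ofReal_le_ofReal ?_
    have := Real.arctan_lt_pi_div_two ((a - t) * ((n : ℝ) + 1))
    linarith
  · simp [lintegral_const]
    exact ENNReal.mul_ne_top ENNReal.ofReal_ne_top (measure_ne_top μ _)
  · rcases lt_trichotomy t a with hlt | heq | hgt
    · have hval : g t = ENNReal.ofReal π := by
        rw [hg]; simp [hlt, ne_of_lt hlt]
      rw [hval]
      have h1 : Tendsto (fun n : ℕ => (a - t) * ((n : ℝ) + 1)) atTop atTop :=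
        hcast.const_mul_atTop (by linarith)
      have h2 : Tendsto (fun n : ℕ => Real.arctan ((a - t) * ((n : ℝ) + 1)) + π / 2) atTop
          (𝓝 (π / 2 + π / 2)) :=
        Tendsto.add_const _ ((tendsto_nhds_of_tendsto_nhdsWithin Real.tendsto_arctan_atTop).comp h1)
      have := (ENNReal.continuous_ofReal.tendsto _).comp h2
      convert this using 2
      norm_num
      rw [add_halves]
    · subst heq
      have hval : g t = ENNReal.ofReal (π / 2) := by
        rw [hg]; simp
      rw [hval]
      simp only [sub_self, zero_mul, Real.arctan_zero, zero_add]
      exact tendsto_const_nhds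
    · have hval : g t = 0 := by
        rw [hg]; simp [not_lt.mpr hgt.le, ne_of_gt hgt]
      rw [hval]
      have h1 : Tendsto (fun n : ℕ => (a - t) * ((n : ℝ) + 1)) atTop atBot := by
        rw [show (a - t) = -(t - a) by ring]
        simp_rw [neg_mul]
        exact tendsto_neg_atTop_atBot.comp (hcast.const_mul_atTop (by linarith : (0:ℝ) < t - a))
      have h2 : Tendsto (fun n : ℕ => Real.arctan ((a - t) * ((n : ℝ) + 1)) + π / 2) atTop
          (𝓝 (-(π / 2) + π / 2)) :=
        Tendsto.add_const _ ((tendsto_nhds_of_tendsto_nhdsWithin Real.tendsto_arctan_atBot).comp h1)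
      have := (ENNReal.continuous_ofReal.tendsto _).comp h2
      convert this using 2
      norm_num
      rw [neg_add_cancel, ENNReal.ofReal_zero]

/-- Squeeze step: recovering `μ (Iic a)`. -/
lemma measure_Iic_split (μ : Measure ℝ) (b : ℝ) : μ (Iic b) = μ (Iio b) + μ {b} := by
  have hset : Iic b = Iio b ∪ {b} := by
    ext x; simp [le_iff_lt_or_eq]
  rw [hset, measure_union (by simp) (measurableSet_singleton b)]

lemma squeeze_iic (μ : Measure ℝ) [IsFiniteMeasure μ] (a : ℝ) :
    Tendsto (fun n : ℕ => ENNReal.ofReal π * μ (Iio (a + 1 / ((n : ℝ) + 1)))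
        + ENNReal.ofReal (π / 2) * μ {a + 1 / ((n : ℝ) + 1)})
      atTop (𝓝 (ENNReal.ofReal π * μ (Iic a))) := by
  have hpos : ∀ n : ℕ, 0 < 1 / ((n : ℝ) + 1) := fun n => by positivity
  have hupper : Tendsto (fun n : ℕ => ENNReal.ofReal π * μ (Iic (a + 1 / ((n : ℝ) + 1))))
      atTop (𝓝 (ENNReal.ofReal π * μ (Iic a))) := by
    have hmono : Antitone fun n : ℕ => Iic (a + 1 / ((n : ℝ) + 1)) := by
      intro n m hnm
      refine Iic_subset_Iic.mpr ?_
      have : 1 / ((m : ℝ) + 1) ≤ 1 / ((n : ℝ) + 1) := by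
        apply one_div_le_one_div_of_le (by positivity)
        exact_mod_cast add_le_add_left (Nat.cast_le.mpr hnm) 1
      linarith
    have hInter : (⋂ n : ℕ, Iic (a + 1 / ((n : ℝ) + 1))) = Iic a := by
      ext x
      simp only [mem_iInter, mem_Iic]
      constructor
      · intro hx
        by_contra hax
        push_neg at hax
        obtain ⟨n, hn⟩ := exists_nat_one_div_lt (show 0 < x - a by linarith)
        have := hx n
        linarith
      · intro hx n
        have := (hpos n).le
        linarith
    have := tendsto_measure_iInter_atTop
      (fun n => (measurableSet_Iic).nullMeasurableSet) hmono ⟨0, measure_ne_top μ _⟩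
    rw [hInter] at this
    exact ENNReal.Tendsto.const_mul this (Or.inr ENNReal.ofReal_ne_top)
  refine tendsto_of_tendsto_of_tendsto_of_le_of_le tendsto_const_nhds hupper
    (fun n => ?_) (fun n => ?_)
  · calc ENNReal.ofReal π * μ (Iic a)
        ≤ ENNReal.ofReal π * μ (Iio (a + 1 / ((n : ℝ) + 1))) := by
          refine mul_le_mul_right (measure_mono fun x hx => ?_) _
          have := hpos n
          simp only [mem_Iic] at hx
          simp only [mem_Iio]
          linarith
      _ ≤ _ := le_self_add
  · rw [measure_Iic_split μ (a + 1 / ((n : ℝ) + 1)), mul_add]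
    refine add_le_add_right (mul_le_mul_left (ENNReal.ofReal_le_ofReal ?_) _) _
    linarith [Real.pi_pos]

/-- Mass recovery: a measure integrating the Poisson kernels has total mass the sup of the
Poisson integrals. -/

lemma mass_formula (μ : Measure ℝ)
    (hInt : ∀ n : ℕ, Integrable
      (fun t : ℝ => (((n : ℝ) + 1)) * ((((n : ℝ) + 1)) / ((0 - t) ^ 2 + (((n : ℝ) + 1)) ^ 2))) μ) :
    μ univ = ⨆ n : ℕ, ENNReal.ofReal
      (∫ t : ℝ, (((n : ℝ) + 1)) * ((((n : ℝ) + 1)) / ((0 - t) ^ 2 + (((n : ℝ) + 1)) ^ 2)) ∂μ) := by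
  set F : ℕ → ℝ → ℝ :=
    fun n t => (((n : ℝ) + 1)) * ((((n : ℝ) + 1)) / ((0 - t) ^ 2 + (((n : ℝ) + 1)) ^ 2)) with hF
  have hden : ∀ (n : ℕ) (t : ℝ), 0 < (0 - t) ^ 2 + ((n : ℝ) + 1) ^ 2 := fun n t => by positivity
  have hFnonneg : ∀ n t, 0 ≤ F n t := fun n t => by
    rw [hF]
    have := (hden n t).le
    positivity
  have hFmono : ∀ t, Monotone fun n : ℕ => ENNReal.ofReal (F n t) := by
    intro t
    apply monotone_nat_of_le_succ
    intro n
    apply ENNReal.ofReal_le_ofReal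
    rw [hF]
    simp only
    rw [mul_div_assoc', mul_div_assoc', div_le_div_iff₀ (hden n t) (hden (n + 1) t)]
    push_cast
    nlinarith [sq_nonneg t, Nat.cast_nonneg (α := ℝ) n]
  have hFtend : ∀ t, Tendsto (fun n : ℕ => ENNReal.ofReal (F n t)) atTop (𝓝 1) := by
    intro t
    have hreal : Tendsto (fun n : ℕ => F n t) atTop (𝓝 1) := by
      have heq : ∀ n : ℕ, F n t = (t ^ 2 / ((n : ℝ) + 1) ^ 2 + 1)⁻¹ := by
        intro n
        rw [hF]
        have h1 : ((n : ℝ) + 1) ≠ 0 := by positivity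
        have h2 : ((0 : ℝ) - t) ^ 2 + ((n : ℝ) + 1) ^ 2 ≠ 0 := (hden n t).ne'
        field_simp
        ring
      simp_rw [heq]
      have hsq : Tendsto (fun n : ℕ => ((n : ℝ) + 1) ^ 2) atTop atTop :=
        (tendsto_pow_atTop two_ne_zero).comp
          (tendsto_atTop_add_const_right _ 1 tendsto_natCast_atTop_atTop)
      have h0 : Tendsto (fun n : ℕ => t ^ 2 / ((n : ℝ) + 1) ^ 2) atTop (𝓝 0) :=
        tendsto_const_nhds.div_atTop hsq
      have := ((h0.add_const 1).inv₀ (by norm_num))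
      simpa using this
    have := (ENNReal.continuous_ofReal.tendsto _).comp hreal
    rw [ENNReal.ofReal_one] at this
    exact this
  have hsup : ∀ t : ℝ, (⨆ n : ℕ, ENNReal.ofReal (F n t)) = 1 := fun t =>
    tendsto_nhds_unique (tendsto_atTop_iSup (hFmono t)) (hFtend t)
  have hmeas : ∀ n : ℕ, Measurable fun t => ENNReal.ofReal (F n t) := by
    intro n
    apply Measurable.ennreal_ofReal
    apply Continuous.measurable
    exact continuous_const.mul (continuous_const.div (by continuity) fun t => (hden n t).ne')
  calc μ univ = ∫⁻ _ : ℝ, 1 ∂μ := (lintegral_one (μ := μ)).symm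
    _ = ∫⁻ t : ℝ, ⨆ n : ℕ, ENNReal.ofReal (F n t) ∂μ := by
        refine lintegral_congr fun t => (hsup t).symm
    _ = ⨆ n : ℕ, ∫⁻ t : ℝ, ENNReal.ofReal (F n t) ∂μ := lintegral_iSup hmeas
        (fun n m hnm => fun t => hFmono t hnm)
    _ = ⨆ n : ℕ, ENNReal.ofReal (∫ t : ℝ, F n t ∂μ) := by
        refine iSup_congr fun n => ?_
        rw [ofReal_integral_eq_lintegral_ofReal (hInt n)
          (Filter.Eventually.of_forall fun t => hFnonneg n t)]

/-- **Uniqueness**: a measure whose Cauchy transform agrees on the upper half plane with that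
of a probability measure is equal to it. -/
theorem cauchy_uniqueness (η τ : Measure ℝ) [IsProbabilityMeasure τ]
    (h : ∀ z : ℂ, 0 < z.im → cauchyTransform η z = cauchyTransform τ z) : η = τ := by
  have hIτ : ∀ z : ℂ, 0 < z.im → Integrable (fun t : ℝ => (z - (t : ℂ))⁻¹) τ :=
    fun z hz => integrable_res τ hz.ne'
  -- the Cauchy transform of τ at I has negative imaginary part
  have hIm : (cauchyTransform τ Complex.I).im < 0 := by
    rw [im_cauchy τ (hIτ Complex.I (by simp))]
    simp only [Complex.I_re, Complex.I_im]
    have hi : Integrable (fun t : ℝ => 1 / ((0 - t) ^ 2 + 1 ^ 2)) τ := by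
      have := integrable_pker_of_res τ (z := Complex.I) (by simp) (hIτ _ (by simp))
      simpa [Complex.I_re, Complex.I_im] using this
    have hpos : 0 < ∫ t : ℝ, 1 / ((0 - t) ^ 2 + 1 ^ 2) ∂τ := by
      rw [integral_pos_iff_support_of_nonneg_ae
        (Filter.Eventually.of_forall fun t => by positivity) hi]
      have hsupp : Function.support (fun t : ℝ => 1 / ((0 - t) ^ 2 + 1 ^ 2)) = univ := by
        ext t
        simp only [Function.mem_support, Set.mem_univ, iff_true]
        positivity
      rw [hsupp]
      simp
    have hneg : ∫ t : ℝ, -(1:ℝ) / ((0 - t) ^ 2 + 1 ^ 2) ∂τ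
        = -∫ t : ℝ, 1 / ((0 - t) ^ 2 + 1 ^ 2) ∂τ := by
      simp_rw [neg_div]
      exact integral_neg _
    rw [hneg]
    linarith
  -- bootstrap integrability of resolvents w.r.t. η
  have hηI : Integrable (fun t : ℝ => (Complex.I - (t : ℂ))⁻¹) η := by
    by_contra hc
    have h0 : cauchyTransform η Complex.I = 0 := integral_undef hc
    have heq := h Complex.I (by simp)
    rw [h0] at heq
    rw [← heq] at hIm
    simp at hIm
  have hIη : ∀ z : ℂ, 0 < z.im → Integrable (fun t : ℝ => (z - (t : ℂ))⁻¹) η :=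
    fun z hz => integrable_res_all η hηI hz
  -- equality of Poisson transforms
  have hP : ∀ x y : ℝ, 0 < y →
      ∫ t : ℝ, y / ((x - t) ^ 2 + y ^ 2) ∂η = ∫ t : ℝ, y / ((x - t) ^ 2 + y ^ 2) ∂τ := by
    intro x y hy
    have hz : (0:ℝ) < (⟨x, y⟩ : ℂ).im := hy
    have him := congrArg Complex.im (h ⟨x, y⟩ hz)
    rw [im_cauchy η (hIη ⟨x, y⟩ hz), im_cauchy τ (hIτ ⟨x, y⟩ hz)] at him
    have hre : (⟨x, y⟩ : ℂ).re = x := rfl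
    have hzim : (⟨x, y⟩ : ℂ).im = y := rfl
    rw [hre, hzim] at him
    simp_rw [neg_div] at him
    rw [integral_neg, integral_neg] at him
    exact neg_injective him
  have hIntPη : ∀ x y : ℝ, 0 < y → Integrable (fun t : ℝ => y / ((x - t) ^ 2 + y ^ 2)) η :=
    fun x y hy => integrable_pker_of_res η (z := ⟨x, y⟩) hy (hIη ⟨x, y⟩ hy)
  have hIntPτ : ∀ x y : ℝ, 0 < y → Integrable (fun t : ℝ => y / ((x - t) ^ 2 + y ^ 2)) τ :=
    fun x y hy => integrable_pker_of_res τ (z := ⟨x, y⟩) hy (hIτ ⟨x, y⟩ hy)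
  -- η is a probability measure
  have hηuniv : η univ = 1 := by
    have hIη' : ∀ n : ℕ, Integrable
        (fun t : ℝ => ((n:ℝ)+1) * (((n:ℝ)+1) / ((0 - t) ^ 2 + ((n:ℝ)+1) ^ 2))) η :=
      fun n => (hIntPη 0 ((n:ℝ)+1) (by positivity)).const_mul _
    have hIτ' : ∀ n : ℕ, Integrable
        (fun t : ℝ => ((n:ℝ)+1) * (((n:ℝ)+1) / ((0 - t) ^ 2 + ((n:ℝ)+1) ^ 2))) τ :=
      fun n => (hIntPτ 0 ((n:ℝ)+1) (by positivity)).const_mul _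
    have hint_eq : ∀ n : ℕ,
        ∫ t : ℝ, ((n:ℝ)+1) * (((n:ℝ)+1) / ((0 - t) ^ 2 + ((n:ℝ)+1) ^ 2)) ∂η
          = ∫ t : ℝ, ((n:ℝ)+1) * (((n:ℝ)+1) / ((0 - t) ^ 2 + ((n:ℝ)+1) ^ 2)) ∂τ := by
      intro n
      rw [integral_const_mul, integral_const_mul, hP 0 ((n:ℝ)+1) (by positivity)]
    rw [mass_formula η hIη']
    simp_rw [hint_eq]
    rw [← mass_formula τ hIτ']
    exact measure_univ
  haveI : IsProbabilityMeasure η := ⟨hηuniv⟩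
  -- equality of the regularized distribution functions
  have hΦ : ∀ a : ℝ, ENNReal.ofReal π * η (Iio a) + ENNReal.ofReal (π / 2) * η {a}
      = ENNReal.ofReal π * τ (Iio a) + ENNReal.ofReal (π / 2) * τ {a} := by
    intro a
    have hyn : ∀ n : ℕ, (0:ℝ) < (((n:ℝ)+1))⁻¹ := fun n => by positivity
    have hEq : ∀ n : ℕ,
        ∫⁻ t : ℝ, ENNReal.ofReal (Real.arctan ((a - t) * ((n:ℝ)+1)) + π / 2) ∂η
          = ∫⁻ t : ℝ, ENNReal.ofReal (Real.arctan ((a - t) * ((n:ℝ)+1)) + π / 2) ∂τ := by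
      intro n
      have hdiv : ∀ t : ℝ, (a - t) / (((n:ℝ)+1))⁻¹ = (a - t) * ((n:ℝ)+1) := fun t =>
        div_inv_eq_mul _ _
      have e1 := arctan_identity η a (hyn n) (fun x => hIntPη x _ (hyn n))
      have e2 := arctan_identity τ a (hyn n) (fun x => hIntPτ x _ (hyn n))
      simp_rw [hdiv] at e1 e2
      rw [e1, e2]
      exact lintegral_congr fun x => by rw [hP x _ (hyn n)]
    have l1 := lim_arctan η a
    have l2 := lim_arctan τ a
    simp_rw [hEq] at l1
    exact tendsto_nhds_unique l1 l2
  -- equality on Iic intervals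
  have hIic : ∀ a : ℝ, η (Iic a) = τ (Iic a) := by
    intro a
    have s1 := squeeze_iic η a
    have s2 := squeeze_iic τ a
    have hfun : (fun n : ℕ => ENNReal.ofReal π * η (Iio (a + 1 / ((n:ℝ)+1)))
          + ENNReal.ofReal (π / 2) * η {a + 1 / ((n:ℝ)+1)})
        = fun n : ℕ => ENNReal.ofReal π * τ (Iio (a + 1 / ((n:ℝ)+1)))
          + ENNReal.ofReal (π / 2) * τ {a + 1 / ((n:ℝ)+1)} :=
      funext fun n => hΦ _
    rw [hfun] at s1
    have hmul := tendsto_nhds_unique s1 s2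
    have hπ0 : ENNReal.ofReal π ≠ 0 := (ENNReal.ofReal_pos.mpr Real.pi_pos).ne'
    exact (ENNReal.mul_right_inj hπ0 ENNReal.ofReal_ne_top).mp hmul
  exact MeasureTheory.Measure.ext_of_Iic η τ hIic

end Uniqueness

/-- For `c ∈ (−1, 0]`, the Askey–Wimp–Kerov distribution `μ_{c+1}`, dilated by
`1/√(c+1)`, decomposes as a free additive convolution `ν_c ⊞ S` of the standard
semicircle law `S` with some probability measure `ν_c`.  Here `conv` is free additive
convolution, `S` the centered semicircle law of variance one, the relation
`G_{μ_{c+1}}(z) = (z − F_{μ_c}(z))/(c+1)` is the continued-fraction identity, the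
variance-one dilation `μ_c¹ = D_{1/√(c+1)} μ_c` is freely infinitely divisible, and the
Belinschi–Nica characterization of free infinite divisibility is assumed. -/
theorem awk_semicircle_decomposition
    (conv : Measure ℝ → Measure ℝ → Measure ℝ) (S : Measure ℝ)
    (hS : IsProbabilityMeasure S)
    (c : ℝ) (hc1 : -1 < c) (hc2 : c ≤ 0)
    (μc μc1 : Measure ℝ) (hμc : IsProbabilityMeasure μc)
    (hμc1 : IsProbabilityMeasure μc1)
    -- the continued fraction relation between `μ_c` and `μ_{c+1}`:
    (hCF : ∀ z : ℂ, 0 < z.im →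
      cauchyTransform μc1 z = (z - recipCauchy μc z) / ((c : ℂ) + 1))
    -- the variance-one dilation of `μ_c` has mean zero and variance one:
    (hmean : ∫ x : ℝ, x ∂(dilate (Real.sqrt (c + 1))⁻¹ μc) = 0)
    (hvar : ∫ x : ℝ, x ^ 2 ∂(dilate (Real.sqrt (c + 1))⁻¹ μc) = 1)
    -- free infinite divisibility of the dilation of `μ_c` (given):
    (hFID : FreelyInfDivisible conv (dilate (Real.sqrt (c + 1))⁻¹ μc))
    -- Belinschi–Nica characterization (given):
    (hBN : ∀ lam : Measure ℝ, IsProbabilityMeasure lam →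
      (∫ x : ℝ, x ∂lam) = 0 → (∫ x : ℝ, x ^ 2 ∂lam) = 1 →
      (FreelyInfDivisible conv lam ↔
        ∃ ν ρ : Measure ℝ, IsProbabilityMeasure ν ∧ IsProbabilityMeasure ρ ∧
          (∀ z : ℂ, 0 < z.im → recipCauchy ρ z = z - cauchyTransform ν z) ∧
          (∀ z : ℂ, 0 < z.im →
            recipCauchy lam z = z - cauchyTransform (conv ν S) z))) :
    ∃ ν : Measure ℝ, IsProbabilityMeasure ν ∧
      dilate (Real.sqrt (c + 1))⁻¹ μc1 = conv ν S := by
  set r := Real.sqrt (c + 1) with hrdef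
  have hc1' : 0 < c + 1 := by linarith
  have hr : 0 < r := Real.sqrt_pos.mpr hc1'
  have hr2 : r ^ 2 = c + 1 := Real.sq_sqrt hc1'.le
  have hrC : (r : ℂ) ≠ 0 := by exact_mod_cast hr.ne'
  have hr2C : (r : ℂ) ^ 2 = (c : ℂ) + 1 := by
    have := congrArg (fun x : ℝ => (x : ℂ)) hr2
    push_cast at this
    exact this
  have hcC : (c : ℂ) + 1 ≠ 0 := by
    rw [← hr2C]
    exact pow_ne_zero 2 hrC
  have hmeas : Measurable fun x : ℝ => r⁻¹ * x := measurable_const_mul _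
  haveI hlamP : IsProbabilityMeasure (dilate r⁻¹ μc) :=
    Measure.isProbabilityMeasure_map hmeas.aemeasurable
  haveI hτP : IsProbabilityMeasure (dilate r⁻¹ μc1) :=
    Measure.isProbabilityMeasure_map hmeas.aemeasurable
  -- Cauchy transform of a dilation
  have hdil : ∀ (μ : Measure ℝ), IsProbabilityMeasure μ → ∀ z : ℂ, 0 < z.im →
      cauchyTransform (dilate r⁻¹ μ) z = (r : ℂ) * cauchyTransform μ ((r : ℂ) * z) := by
    intro μ hμ z hz
    rw [cauchyTransform, dilate,
      integral_map hmeas.aemeasurable (cont_res hz.ne').aestronglyMeasurable]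
    calc ∫ t : ℝ, (z - ((r⁻¹ * t : ℝ) : ℂ))⁻¹ ∂μ
        = ∫ t : ℝ, (r : ℂ) * ((r : ℂ) * z - (t : ℂ))⁻¹ ∂μ := by
          congr 1
          ext t
          rw [show z - ((r⁻¹ * t : ℝ) : ℂ) = (r : ℂ)⁻¹ * ((r : ℂ) * z - (t : ℂ)) by
            push_cast
            field_simp]
          rw [mul_inv, inv_inv]
      _ = (r : ℂ) * cauchyTransform μ ((r : ℂ) * z) := integral_const_mul _ _
  -- apply the Belinschi–Nica characterization
  obtain ⟨ν, ρ, hνP, hρP, -, hBNmain⟩ := (hBN (dilate r⁻¹ μc) hlamP hmean hvar).mp hFID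
  refine ⟨ν, hνP, ?_⟩
  -- the Cauchy transforms of `conv ν S` and the dilated `μ_{c+1}` agree on the UHP
  have key : ∀ z : ℂ, 0 < z.im →
      cauchyTransform (conv ν S) z = cauchyTransform (dilate r⁻¹ μc1) z := by
    intro z hz
    have hrz : 0 < ((r : ℂ) * z).im := by
      rw [Complex.mul_im, Complex.ofReal_re, Complex.ofReal_im, zero_mul, add_zero]
      exact mul_pos hr hz
    have h1 := hBNmain z hz
    have h2 := hCF ((r : ℂ) * z) hrz
    have h3 := hdil μc hμc z hz
    have h4 := hdil μc1 hμc1 z hz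
    have h5 : recipCauchy (dilate r⁻¹ μc) z = (r : ℂ)⁻¹ * recipCauchy μc ((r : ℂ) * z) := by
      rw [recipCauchy, recipCauchy, h3, mul_inv]
    have hG : cauchyTransform (conv ν S) z
        = z - (r : ℂ)⁻¹ * recipCauchy μc ((r : ℂ) * z) := by
      rw [← h5]
      rw [h1]
      ring
    rw [hG, h4, h2, ← hr2C]
    field_simp
  exact (cauchy_uniqueness (conv ν S) (dilate r⁻¹ μc1) key).symm
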